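/- arXiv:1707.03892 — 2 statements merged into one kernel-verified Lean document; each statement's English description precedes it below -/
import Mathlib

section
/- For every n ≥ 3k, the graph G_n obtained from K_n by deleting all edges inside a fixed (n−2k+1)-vertex subset has minimum degree 2k−1, at least 3k vertices, but does not contain k vertex-disjoint cycles. -/
/-- `G` contains `k` pairwise vertex-disjoint cycles. -/
def HasDisjointCycles {V : Type*} (G : SimpleGraph V) (k : ℕ) : Prop :=
  ∃ c : Fin k → (v : V) × G.Walk v v,
    (∀ i, (c i).2.IsCycle) ∧
    ∀ i j, i ≠ j → List.Disjoint (c i).2.support (c j).2.support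

/-- The graph `K_n - E(K_{n-2k+1})`: the complete graph on `n` vertices with all edges
inside the fixed set `A` deleted. -/
def GnGraph (n : ℕ) (A : Finset (Fin n)) : SimpleGraph (Fin n) where
  Adj v w := v ≠ w ∧ ¬(v ∈ A ∧ w ∈ A)
  symm := by
    constructor
    intro v w h
    exact ⟨h.1.symm, fun hc => h.2 ⟨hc.2, hc.1⟩⟩
  loopless := by
    constructor
    intro v h
    exact h.1 rfl

instance (n : ℕ) (A : Finset (Fin n)) : DecidableRel (GnGraph n A).Adj :=
  fun _ _ => inferInstanceAs (Decidable (_ ∧ _))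

open SimpleGraph

lemma getVert_eq_support_getElem {V : Type*} {G : SimpleGraph V} {u v : V}
    (p : G.Walk u v) {i : ℕ} (hi : i ≤ p.length) :
    p.support[i]'(by rw [Walk.length_support]; omega) = p.getVert i := by
  induction p generalizing i with
  | nil => simp at hi; subst hi; simp
  | cons h q ih =>
    cases i with
    | zero => simp
    | succ n =>
      simp only [Walk.support_cons, Walk.getVert_cons_succ, List.getElem_cons_succ]
      exact ih (by simpa [Walk.length_cons] using hi)

lemma cycle_getVert_inj {V : Type*} {G : SimpleGraph V} {v : V}
    {p : G.Walk v v} (hc : p.IsCycle) {i j : ℕ}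
    (hi1 : 1 ≤ i) (hi2 : i ≤ p.length) (hj1 : 1 ≤ j) (hj2 : j ≤ p.length)
    (hij : i ≠ j) : p.getVert i ≠ p.getVert j := by
  have hnd : p.support.tail.Nodup := hc.2
  have hlen : p.support.tail.length = p.length := by
    simp [List.length_tail, Walk.length_support]
  obtain ⟨a, rfl⟩ : ∃ a, i = a + 1 := ⟨i - 1, by omega⟩
  obtain ⟨b, rfl⟩ : ∃ b, j = b + 1 := ⟨j - 1, by omega⟩
  intro heq
  rw [← getVert_eq_support_getElem p hi2, ← getVert_eq_support_getElem p hj2] at heq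
  rw [← List.getElem_tail (l := p.support) (i := a) (by omega),
      ← List.getElem_tail (l := p.support) (i := b) (by omega)] at heq
  have := (List.Nodup.getElem_inj_iff hnd).mp heq
  omega

lemma getVert_mem_support' {V : Type*} {G : SimpleGraph V} {u v : V}
    (p : G.Walk u v) {i : ℕ} (hi : i ≤ p.length) : p.getVert i ∈ p.support :=
  Walk.mem_support_iff_exists_getVert.mpr ⟨i, rfl, hi⟩

lemma cycle_two_outside {n : ℕ} {A : Finset (Fin n)} {v : Fin n}
    {p : (GnGraph n A).Walk v v} (hc : p.IsCycle) :
    ∃ x ∈ p.support, ∃ y ∈ p.support, x ≠ y ∧ x ∉ A ∧ y ∉ A := by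
  have hL : 3 ≤ p.length := hc.three_le_length
  have hadj : ∀ i, i < p.length → ¬(p.getVert i ∈ A ∧ p.getVert (i + 1) ∈ A) :=
    fun i hi => (p.adj_getVert_succ hi).2
  have h0 : p.getVert 0 = v := p.getVert_zero
  have hLv : p.getVert p.length = v := p.getVert_length
  by_cases hv : v ∈ A
  · refine ⟨p.getVert 1, getVert_mem_support' p (by omega),
      p.getVert (p.length - 1), getVert_mem_support' p (by omega), ?_, ?_, ?_⟩
    · exact cycle_getVert_inj hc le_rfl (by omega) (by omega) (by omega) (by omega)
    · intro h1
      exact hadj 0 (by omega) ⟨by rwa [h0], h1⟩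
    · intro h1
      refine hadj (p.length - 1) (by omega) ⟨h1, ?_⟩
      have : p.length - 1 + 1 = p.length := by omega
      rw [this, hLv]; exact hv
  · by_cases h1 : p.getVert 1 ∈ A
    · refine ⟨v, p.start_mem_support, p.getVert 2, getVert_mem_support' p (by omega),
        ?_, hv, ?_⟩
      · intro h
        have hne := cycle_getVert_inj hc (i := 2) (j := p.length)
          (by omega) (by omega) (by omega) le_rfl (by omega)
        rw [hLv] at hne
        exact hne h.symm
      · intro h2
        exact hadj 1 (by omega) ⟨h1, h2⟩
    · refine ⟨v, p.start_mem_support, p.getVert 1, getVert_mem_support' p (by omega),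
        ?_, hv, h1⟩
      intro h
      have := (p.adj_getVert_succ (i := 0) (by omega)).1
      rw [h0] at this
      exact this h


lemma gnGraph_adj {n : ℕ} {A : Finset (Fin n)} {v w : Fin n} :
    (GnGraph n A).Adj v w ↔ v ≠ w ∧ ¬(v ∈ A ∧ w ∈ A) := Iff.rfl

/-- For every `n ≥ 3k`, the graph `K_n - E(K_{n-2k+1})` has minimum degree `2k-1`,
at least `3k` vertices, but no `k` vertex-disjoint cycles. -/
theorem dirac_erdos_example (k n : ℕ) (hk : 1 ≤ k) (hn : 3 * k ≤ n)
    (A : Finset (Fin n)) (hA : A.card = n - 2 * k + 1) :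
    (GnGraph n A).minDegree = 2 * k - 1 ∧
    3 * k ≤ Fintype.card (Fin n) ∧
    ¬ HasDisjointCycles (GnGraph n A) k := by
  have hcard : Fintype.card (Fin n) = n := Fintype.card_fin n
  haveI : Nonempty (Fin n) := ⟨⟨0, by omega⟩⟩
  have hAc : Aᶜ.card = 2 * k - 1 := by
    rw [Finset.card_compl, hA, hcard]; omega
  have hnb : ∀ v ∈ A, (GnGraph n A).neighborFinset v = Aᶜ := by
    intro v hv
    ext w
    simp only [SimpleGraph.mem_neighborFinset, gnGraph_adj, Finset.mem_compl]
    constructor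
    · rintro ⟨hne, hno⟩ hw
      exact hno ⟨hv, hw⟩
    · intro hw
      exact ⟨fun h => hw (h ▸ hv), fun hc => hw hc.2⟩
  obtain ⟨a, ha⟩ : ∃ a, a ∈ A := Finset.card_pos.mp (by omega)
  have hdeg_a : (GnGraph n A).degree a = 2 * k - 1 := by
    show ((GnGraph n A).neighborFinset a).card = 2 * k - 1
    rw [hnb a ha, hAc]
  refine ⟨?_, by rw [hcard]; omega, ?_⟩
  · refine le_antisymm (hdeg_a ▸ (GnGraph n A).minDegree_le_degree a) ?_
    refine SimpleGraph.le_minDegree_of_forall_le_degree _ _ ?_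
    intro v
    by_cases hv : v ∈ A
    · have : (GnGraph n A).degree v = 2 * k - 1 := by
        show ((GnGraph n A).neighborFinset v).card = 2 * k - 1
        rw [hnb v hv, hAc]
      omega
    · have hsub : {v}ᶜ ⊆ (GnGraph n A).neighborFinset v := by
        intro w hw
        simp only [Finset.mem_compl, Finset.mem_singleton] at hw
        simp only [SimpleGraph.mem_neighborFinset, gnGraph_adj]
        exact ⟨fun h => hw h.symm, fun hc => hv hc.1⟩
      have h1 : ({v}ᶜ : Finset (Fin n)).card = n - 1 := by
        rw [Finset.card_compl, Finset.card_singleton, hcard]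
      have := Finset.card_le_card hsub
      show 2 * k - 1 ≤ ((GnGraph n A).neighborFinset v).card
      omega
  · rintro ⟨c, hcyc, hdisj⟩
    set f : Fin k → Finset (Fin n) :=
      fun i => ((c i).2.support.toFinset.filter (· ∉ A)) with hf
    have h2 : ∀ i, 2 ≤ (f i).card := by
      intro i
      obtain ⟨x, hx, y, hy, hxy, hxA, hyA⟩ := cycle_two_outside (hcyc i)
      refine Finset.one_lt_card.mpr ⟨x, ?_, y, ?_, hxy⟩ <;>
        simp [hf, List.mem_toFinset, *]
    have hdis : ∀ i ∈ Finset.univ, ∀ j ∈ Finset.univ, i ≠ j → Disjoint (f i) (f j) := by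
      intro i _ j _ hij
      refine Finset.disjoint_left.mpr ?_
      intro x hxi hxj
      simp only [hf, Finset.mem_filter, List.mem_toFinset] at hxi hxj
      exact (hdisj i j hij) hxi.1 hxj.1
    have hbi := Finset.card_biUnion hdis
    have hsub : Finset.univ.biUnion f ⊆ Aᶜ := by
      intro x hx
      simp only [hf, Finset.mem_biUnion, Finset.mem_filter, List.mem_toFinset] at hx
      obtain ⟨i, _, _, hxA⟩ := hx
      exact Finset.mem_compl.mpr hxA
    have hle : (Finset.univ.biUnion f).card ≤ Aᶜ.card := Finset.card_le_card hsub
    have hsum : 2 * k ≤ ∑ i, (f i).card := by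
      calc 2 * k = ∑ _i : Fin k, 2 := by simp [mul_comm]
      _ ≤ _ := Finset.sum_le_sum (fun i _ => h2 i)
    rw [hbi] at hle
    omega
end

section
/- For every k ≥ 2, the graph G_0(k) obtained from K_{3k−1} by removing all edges inside a fixed k-element subset S and adding a new vertex x joined exactly to the vertices of S satisfies |G_0(k)| = 3k and |H_k(G_0(k))| − |L_k(G_0(k))| = 3k − 2, but G_0(k) does not contain k vertex-disjoint cycles. -/
/-- `H_k(G)`: the set of vertices of degree at least `2k`. -/
def highSet {V : Type*} [Fintype V] (G : SimpleGraph V) [DecidableRel G.Adj] (k : ℕ) :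
    Finset V :=
  Finset.univ.filter fun v => 2 * k ≤ G.degree v

/-- `L_k(G)`: the set of vertices of degree at most `2k - 2`. -/
def lowSet {V : Type*} [Fintype V] (G : SimpleGraph V) [DecidableRel G.Adj] (k : ℕ) :
    Finset V :=
  Finset.univ.filter fun v => G.degree v ≤ 2 * k - 2

/-- The graph `G₀(k)`: take `K_{3k-1}`, delete all edges inside a `k`-set `S`, and add a
new vertex `none` joined exactly to the vertices of `S`. -/
def G0 (k : ℕ) (S : Finset (Fin (3 * k - 1))) : SimpleGraph (Option (Fin (3 * k - 1))) where
  Adj a b :=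
    match a, b with
    | some v, some w => v ≠ w ∧ ¬(v ∈ S ∧ w ∈ S)
    | some v, none => v ∈ S
    | none, some w => w ∈ S
    | none, none => False
  symm := by
    constructor
    intro a b h
    cases a <;> cases b <;> simp_all <;> tauto
  loopless := by
    constructor
    intro a h
    cases a <;> simp_all

instance (k : ℕ) (S : Finset (Fin (3 * k - 1))) : DecidableRel (G0 k S).Adj := fun a b =>
  match a, b with
  | some _, some _ => inferInstanceAs (Decidable (_ ∧ _))
  | some _, none => inferInstanceAs (Decidable (_ ∈ _))
  | none, some _ => inferInstanceAs (Decidable (_ ∈ _))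
  | none, none => inferInstanceAs (Decidable False)

section Aux

variable {k : ℕ} {S : Finset (Fin (3 * k - 1))}

lemma G0_deg_none (hS : S.card = k) : (G0 k S).degree none = k := by
  rw [← SimpleGraph.card_neighborFinset_eq_degree]
  have h : (G0 k S).neighborFinset none = S.image some := by
    ext a
    cases a <;> simp only [SimpleGraph.mem_neighborFinset] <;> simp [G0]
  rw [h, Finset.card_image_of_injective _ (Option.some_injective _), hS]

lemma G0_deg_some_mem (hk : 2 ≤ k) (hS : S.card = k) {v} (hv : v ∈ S) :
    (G0 k S).degree (some v) = 2 * k := by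
  rw [← SimpleGraph.card_neighborFinset_eq_degree]
  have h : (G0 k S).neighborFinset (some v) = insert none (Sᶜ.image some) := by
    ext a
    cases a with
    | none => simp only [SimpleGraph.mem_neighborFinset]; simp [G0, hv]
    | some w =>
      simp only [SimpleGraph.mem_neighborFinset, Finset.mem_insert, Finset.mem_image,
        Finset.mem_compl]
      constructor
      · rintro ⟨hne, hns⟩
        exact Or.inr ⟨w, fun hw => hns ⟨hv, hw⟩, rfl⟩
      · rintro (h | ⟨b, hb, hb2⟩)
        · exact absurd h (by simp)
        · cases hb2
          exact ⟨fun h => hb (h ▸ hv), fun h => hb h.2⟩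
  rw [h, Finset.card_insert_of_notMem (by simp),
    Finset.card_image_of_injective _ (Option.some_injective _), Finset.card_compl, hS]
  simp only [Fintype.card_fin]
  omega

lemma G0_deg_some_not_mem (hk : 2 ≤ k) {v} (hv : v ∉ S) :
    (G0 k S).degree (some v) = 3 * k - 2 := by
  rw [← SimpleGraph.card_neighborFinset_eq_degree]
  have h : (G0 k S).neighborFinset (some v) = (Finset.univ.erase v).image some := by
    ext a
    cases a with
    | none => simp only [SimpleGraph.mem_neighborFinset]; simp [G0, hv]
    | some w =>
      simp only [SimpleGraph.mem_neighborFinset, Finset.mem_image, Finset.mem_erase,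
        Finset.mem_univ, and_true]
      constructor
      · rintro ⟨hne, -⟩
        exact ⟨w, Ne.symm hne, rfl⟩
      · rintro ⟨b, hb, hb2⟩
        cases hb2
        exact ⟨Ne.symm hb, fun h => hv h.1⟩
  rw [h, Finset.card_image_of_injective _ (Option.some_injective _),
    Finset.card_erase_of_mem (Finset.mem_univ _)]
  simp only [Finset.card_univ, Fintype.card_fin]
  omega

lemma G0_no_triangle_none :
    ¬ ∃ a b, (G0 k S).Adj none a ∧ (G0 k S).Adj a b ∧ (G0 k S).Adj b none := by
  rintro ⟨a, b, h1, h2, h3⟩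
  cases a with
  | none => exact h1
  | some v =>
    cases b with
    | none => exact h3
    | some w => exact h2.2 ⟨h1, h3⟩

lemma triangle_of_cycle {V : Type*} {G : SimpleGraph V} {u : V} (p : G.Walk u u)
    (hl : p.length = 3) {x : V} (hx : x ∈ p.support) :
    ∃ a b, G.Adj x a ∧ G.Adj a b ∧ G.Adj b x := by
  cases p with
  | nil => simp at hl
  | cons h1 q =>
    cases q with
    | nil => simp at hl
    | cons h2 r =>
      cases r with
      | nil => simp at hl
      | cons h3 s =>
        cases s with
        | nil =>
          simp only [SimpleGraph.Walk.support_cons, SimpleGraph.Walk.support_nil,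
            List.mem_cons, List.not_mem_nil, or_false] at hx
          rcases hx with rfl | rfl | rfl | rfl
          · exact ⟨_, _, h1, h2, h3⟩
          · exact ⟨_, _, h2, h3, h1⟩
          · exact ⟨_, _, h3, h1, h2⟩
          · exact ⟨_, _, h1, h2, h3⟩
        | cons h4 t => simp at hl

/-- In a graph on exactly `3k` vertices with `k` disjoint cycles, every vertex lies on a
cycle of length exactly `3`. -/
lemma mem_short_cycle {V : Type*} [Fintype V] [DecidableEq V] {G : SimpleGraph V} {k : ℕ}
    (hV : Fintype.card V = 3 * k) (h : HasDisjointCycles G k) (x : V) :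
    ∃ (u : V) (p : G.Walk u u), p.length = 3 ∧ x ∈ p.support := by
  obtain ⟨c, hcyc, hdisj⟩ := h
  classical
  set T : Fin k → Finset V := fun i => (c i).2.support.tail.toFinset with hT
  have hTcard : ∀ i, (T i).card = (c i).2.length := by
    intro i
    rw [hT, List.toFinset_card_of_nodup (hcyc i).support_nodup]
    simp [SimpleGraph.Walk.length_support]
  have hT3 : ∀ i, 3 ≤ (T i).card := fun i => (hTcard i) ▸ (hcyc i).three_le_length
  have hdisjT : ∀ i j, i ≠ j → Disjoint (T i) (T j) := by
    intro i j hij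
    rw [Finset.disjoint_left]
    intro a ha hb
    exact hdisj i j hij (List.mem_of_mem_tail (List.mem_toFinset.mp ha))
      (List.mem_of_mem_tail (List.mem_toFinset.mp hb))
  have hbi : (Finset.univ.biUnion T).card = ∑ i, (T i).card :=
    Finset.card_biUnion (fun i _ j _ h => hdisjT i j h)
  have hle : (Finset.univ.biUnion T).card ≤ 3 * k := by
    rw [← hV]
    exact Finset.card_le_univ _
  have hge : 3 * k ≤ ∑ i, (T i).card := by
    calc 3 * k = ∑ _i : Fin k, 3 := by simp [mul_comm]
    _ ≤ ∑ i, (T i).card := Finset.sum_le_sum (fun i _ => hT3 i)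
  have hsum : ∑ i, (T i).card = 3 * k := le_antisymm (hbi ▸ hle) hge
  have heach : ∀ i, (T i).card = 3 := by
    have := (Finset.sum_eq_sum_iff_of_le (fun i (_ : i ∈ Finset.univ) => hT3 i)).mp ?_
    · exact fun i => ((this i (Finset.mem_univ i)).symm)
    · rw [hsum]; simp [mul_comm]
  have huniv : Finset.univ.biUnion T = Finset.univ :=
    Finset.eq_univ_of_card _ (by rw [hbi, hsum, hV])
  have hx : x ∈ Finset.univ.biUnion T := huniv ▸ Finset.mem_univ x
  obtain ⟨i, -, hi⟩ := Finset.mem_biUnion.mp hx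
  refine ⟨(c i).1, (c i).2, ?_, ?_⟩
  · rw [← hTcard i, heach i]
  · exact List.mem_of_mem_tail (List.mem_toFinset.mp hi)

end Aux

/-- `G₀(k)` has `3k` vertices and `|H_k| - |L_k| = 3k - 2`, but no `k` disjoint cycles. -/
theorem G0_example (k : ℕ) (hk : 2 ≤ k) (S : Finset (Fin (3 * k - 1))) (hS : S.card = k) :
    Fintype.card (Option (Fin (3 * k - 1))) = 3 * k ∧
    (highSet (G0 k S) k).card = (lowSet (G0 k S) k).card + (3 * k - 2) ∧
    ¬ HasDisjointCycles (G0 k S) k := by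
  have hV : Fintype.card (Option (Fin (3 * k - 1))) = 3 * k := by
    simp only [Fintype.card_option, Fintype.card_fin]
    omega
  refine ⟨hV, ?_, ?_⟩
  · have hhigh : highSet (G0 k S) k = Finset.univ.image some := by
      ext a
      cases a with
      | none =>
        simp [highSet, G0_deg_none hS]
        omega
      | some v =>
        simp only [highSet, Finset.mem_filter, Finset.mem_univ, true_and, Finset.mem_image]
        constructor
        · intro _; exact ⟨v, rfl⟩
        · intro _
          by_cases hv : v ∈ S
          · rw [G0_deg_some_mem hk hS hv]
          · rw [G0_deg_some_not_mem hk hv]; omega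
    have hlow : lowSet (G0 k S) k = {none} := by
      ext a
      cases a with
      | none =>
        simp [lowSet, G0_deg_none hS]
        omega
      | some v =>
        simp only [lowSet, Finset.mem_filter, Finset.mem_univ, true_and, Finset.mem_singleton]
        constructor
        · intro h
          by_cases hv : v ∈ S
          · rw [G0_deg_some_mem hk hS hv] at h; omega
          · rw [G0_deg_some_not_mem hk hv] at h; omega
        · intro h; exact absurd h (by simp)
    rw [hhigh, hlow, Finset.card_image_of_injective _ (Option.some_injective _),
      Finset.card_singleton, Finset.card_univ, Fintype.card_fin]
    omega
  · intro h
    obtain ⟨u, p, hl, hx⟩ := mem_short_cycle hV h none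
    obtain ⟨a, b, h1, h2, h3⟩ := triangle_of_cycle p hl hx
    exact G0_no_triangle_none ⟨a, b, h1, h2, h3⟩
end
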